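/- Let n ≥ 1, δ > 0, and b_1,…,b_n ≥ 0. Then ∏_{k=1}^n |((1 - e^{-δk})/(1 - e^{-(δ+2πiα)k}))|^{b_k} ≤ exp(-(log 5 / 2) ∑_{k=1}^n b_k e^{-δk} sin²(π α k)) for all real α. -/

import Mathlib

open Real Complex


lemma exp_log5_le (y : ℝ) (h0 : 0 ≤ y) (h1 : y ≤ 1) :
    Real.exp (Real.log 5 * y) ≤ 1 + 4 * y := by
  have h := convexOn_exp.2 (Set.mem_univ (0:ℝ)) (Set.mem_univ (Real.log 5))
    (by linarith : (0:ℝ) ≤ 1 - y) h0 (by ring)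
  simp only [smul_eq_mul, mul_zero, zero_add, Real.exp_zero] at h
  rw [Real.exp_log (by norm_num : (0:ℝ) < 5)] at h
  have : Real.exp (Real.log 5 * y) = Real.exp (y * Real.log 5) := by ring_nf
  rw [this]; linarith

lemma factor_bound (δ : ℝ) (hδ : 0 < δ) (α : ℝ) (k : ℕ) (hk : 1 ≤ k) (b : ℝ) (hb : 0 ≤ b) :
    ((1 - Real.exp (-δ * k)) /
      ‖1 - Complex.exp (-(↑δ + 2 * ↑π * I * ↑α) * k)‖) ^ b ≤
    Real.exp (-(Real.log 5 / 2) * (b * Real.exp (-δ * k) * Real.sin (π * α * k) ^ 2)) := by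
  have hk1 : (1:ℝ) ≤ (k:ℝ) := by exact_mod_cast hk
  set E := Real.exp (-δ * k) with hE
  have hE0 : 0 < E := Real.exp_pos _
  have hE1 : E < 1 := by
    rw [hE, Real.exp_lt_one_iff]; nlinarith
  set S := Real.sin (π * α * k) ^ 2 with hS
  have hS0 : 0 ≤ S := sq_nonneg _
  have hS1 : S ≤ 1 := Real.sin_sq_le_one _
  set A := ‖1 - Complex.exp (-(↑δ + 2 * ↑π * I * ↑α) * k)‖ with hA
  have hA2 : A ^ 2 = (1 - E) ^ 2 + 4 * E * S := by
    have hw : -((δ:ℂ) + 2 * ↑π * I * ↑α) * (k:ℂ)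
        = ↑(-δ * (k:ℝ)) + ↑(-(2 * π * α * k)) * I := by
      push_cast; ring
    rw [hA, hw, Complex.exp_add, ← Complex.ofReal_exp, Complex.exp_mul_I, Complex.sq_norm]
    simp only [Complex.normSq_apply, Complex.sub_re, Complex.sub_im, Complex.one_re,
      Complex.one_im, Complex.mul_re, Complex.mul_im, Complex.add_re, Complex.add_im,
      Complex.ofReal_re, Complex.ofReal_im, Complex.cos_ofReal_re, Complex.cos_ofReal_im,
      Complex.sin_ofReal_re, Complex.sin_ofReal_im, Complex.I_re, Complex.I_im,
      Real.cos_neg, Real.sin_neg]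
    have h2 : (2:ℝ) * π * α * k = 2 * (π * α * k) := by ring
    have hc : Real.cos (2 * π * α * k) = Real.cos (π * α * k)^2 - Real.sin (π * α * k)^2 := by
      rw [h2, Real.cos_two_mul']
    have hpy : Real.sin (π * α * k)^2 + Real.cos (π * α * k)^2 = 1 :=
      Real.sin_sq_add_cos_sq _
    have hpy2 : Real.sin (2*π * α * k)^2 + Real.cos (2*π * α * k)^2 = 1 :=
      Real.sin_sq_add_cos_sq _
    rw [hS]
    nlinarith [hc, hpy, hpy2]
  have hEk : 0 < 1 - E := by linarith
  have hApos : 0 < A := by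
    nlinarith [norm_nonneg (1 - Complex.exp (-((δ:ℂ) + 2 * ↑π * I * ↑α) * k))]
  have hES0 : 0 ≤ E * S := by positivity
  have hES1 : E * S ≤ 1 := by nlinarith
  have hexp : Real.exp (Real.log 5 * (E * S)) ≤ 1 + 4 * (E * S) := exp_log5_le _ hES0 hES1
  have hsq : ((1 - E) * Real.exp (Real.log 5 / 2 * (E * S))) ^ 2 ≤ A ^ 2 := by
    have h1 : ((1 - E) * Real.exp (Real.log 5 / 2 * (E * S))) ^ 2
        = (1 - E)^2 * Real.exp (Real.log 5 * (E * S)) := by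
      rw [mul_pow, pow_two (Real.exp _), ← Real.exp_add]
      congr 1
      ring
    rw [h1, hA2]
    have hle : (1-E)^2 * Real.exp (Real.log 5 * (E*S)) ≤ (1-E)^2 * (1 + 4*(E*S)) :=
      mul_le_mul_of_nonneg_left hexp (sq_nonneg _)
    nlinarith [mul_nonneg hES0 (by nlinarith : (0:ℝ) ≤ 1 - (1-E)^2)]
  have hkey : (1 - E) * Real.exp (Real.log 5 / 2 * (E * S)) ≤ A := by
    have hL0 : 0 ≤ (1 - E) * Real.exp (Real.log 5 / 2 * (E * S)) :=
      le_of_lt (mul_pos hEk (Real.exp_pos _))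
    have h := Real.sqrt_le_sqrt hsq
    rwa [Real.sqrt_sq hL0, Real.sqrt_sq hApos.le] at h
  have hRM : (1 - E) / A ≤ Real.exp (-(Real.log 5 / 2) * (E * S)) := by
    rw [neg_mul, Real.exp_neg, inv_eq_one_div, div_le_div_iff₀ hApos (Real.exp_pos _), one_mul]
    exact hkey
  have hR0 : 0 ≤ (1 - E) / A := div_nonneg (le_of_lt hEk) (le_of_lt hApos)
  calc ((1 - E) / A) ^ b ≤ (Real.exp (-(Real.log 5 / 2) * (E * S))) ^ b :=
        Real.rpow_le_rpow hR0 hRM hb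
    _ = Real.exp (-(Real.log 5 / 2) * (b * E * S)) := by
        rw [← Real.exp_mul]; congr 1; ring

/-- Weighted-partitions case of Lemma 3: the modulus of the characteristic function is
bounded by exp(-(log 5/2) ∑_{k=1}^n b_k e^{-δk} sin²(παk)). -/
theorem partitions_char_fun_bound (n : ℕ) (hn : 1 ≤ n) (δ : ℝ) (hδ : 0 < δ)
    (b : ℕ → ℝ) (hb : ∀ k, 1 ≤ k → k ≤ n → 0 ≤ b k) (α : ℝ) :
    ∏ k ∈ Finset.Icc 1 n,
        ((1 - Real.exp (-δ * k)) /
          ‖1 - Complex.exp (-(↑δ + 2 * ↑π * I * ↑α) * k)‖) ^ (b k) ≤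
      Real.exp (-(Real.log 5 / 2) *
        ∑ k ∈ Finset.Icc 1 n, b k * Real.exp (-δ * k) * Real.sin (π * α * k) ^ 2) := by
  rw [Finset.mul_sum, Real.exp_sum]
  apply Finset.prod_le_prod
  · intro k hk
    apply Real.rpow_nonneg
    apply div_nonneg _ (norm_nonneg _)
    have hk0 : (0:ℝ) ≤ (k:ℝ) := Nat.cast_nonneg k
    have : Real.exp (-δ * k) ≤ 1 := Real.exp_le_one_iff.mpr (by nlinarith)
    linarith
  · intro k hk
    simp only [Finset.mem_Icc] at hk
    have h := factor_bound δ hδ α k hk.1 (b k) (hb k hk.1 hk.2)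
    calc ((1 - Real.exp (-δ * k)) /
          ‖1 - Complex.exp (-(↑δ + 2 * ↑π * I * ↑α) * k)‖) ^ (b k)
        ≤ Real.exp (-(Real.log 5 / 2) * (b k * Real.exp (-δ * k) * Real.sin (π * α * k) ^ 2)) := h
      _ = Real.exp (-(Real.log 5 / 2) * (b k * Real.exp (-δ * k) * Real.sin (π * α * k) ^ 2)) := rfl
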